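/- If μ is the uniform distribution on [0,1] and μₙ = (1/n)∑_{k=1}^n δ_{U_k} is the empirical measure of n i.i.d. uniform samples, then E[W₂(μ, μₙ)²] ≤ 1/(6n) for all n ≥ 1. -/

import Mathlib

open MeasureTheory Set
open scoped ENNReal

namespace BL
variable {n : ℕ}

noncomputable def nu : Measure ℝ := volume.restrict (Icc (0:ℝ) 1)

instance : IsProbabilityMeasure (nu) :=
  ⟨by rw [nu, Measure.restrict_apply_univ, Real.volume_Icc]; norm_num⟩

noncomputable def pin (n : ℕ) : Measure (Fin n → ℝ) := Measure.pi (fun _ => nu)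

instance : IsProbabilityMeasure (pin n) := inferInstanceAs (IsProbabilityMeasure (Measure.pi _))

lemma nu_Icc : nu (Icc (0:ℝ) 1) = 1 := by
  rw [nu, Measure.restrict_apply measurableSet_Icc, inter_self, Real.volume_Icc]
  norm_num

lemma div_mono_aux {n : ℕ} {x y : ℝ} (h : x ≤ y) : x/(n:ℝ) ≤ y/n := by
  have : (0:ℝ) ≤ n := Nat.cast_nonneg n
  gcongr

lemma Iv_union (hn : 1 ≤ n) : (⋃ k : Fin n, Ico ((k:ℝ)/n) (((k:ℝ)+1)/n)) = Ico (0:ℝ) 1 := by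
  have hn0 : (0:ℝ) < n := by exact_mod_cast hn
  ext t
  simp only [mem_iUnion, mem_Ico]
  constructor
  · rintro ⟨k, h1, h2⟩
    have hk : (k:ℝ) + 1 ≤ n := by exact_mod_cast k.isLt
    constructor
    · have : (0:ℝ) ≤ (k:ℝ)/n := by positivity
      linarith
    · calc t < ((k:ℝ)+1)/n := h2
        _ ≤ 1 := by rw [div_le_one hn0]; exact hk
  · rintro ⟨h1, h2⟩
    have hnt : 0 ≤ (n:ℝ) * t := by positivity
    have hlt : ⌊(n:ℝ) * t⌋₊ < n := by
      apply Nat.floor_lt hnt |>.2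
      calc (n:ℝ) * t < n * 1 := by nlinarith
        _ = n := by ring
    refine ⟨⟨⌊(n:ℝ) * t⌋₊, hlt⟩, ?_, ?_⟩
    · rw [div_le_iff₀ hn0]
      calc ((⌊(n:ℝ)*t⌋₊ : ℝ)) ≤ n * t := Nat.floor_le hnt
        _ = t * n := by ring
    · rw [lt_div_iff₀ hn0]
      calc t * n = n * t := by ring
        _ < ⌊(n:ℝ)*t⌋₊ + 1 := Nat.lt_floor_add_one _

lemma Iv_disjoint {n : ℕ} :
    Pairwise (Function.onFun Disjoint fun k : Fin n => Ico ((k:ℝ)/n) (((k:ℝ)+1)/n)) := by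
  have key : ∀ k l : Fin n, k < l →
      Disjoint (Ico ((k:ℝ)/n) (((k:ℝ)+1)/n)) (Ico ((l:ℝ)/n) (((l:ℝ)+1)/n)) := by
    intro k l h
    rw [Set.Ico_disjoint_Ico]
    have h1 : (k:ℝ) + 1 ≤ l := by exact_mod_cast h
    calc min (((k:ℝ)+1)/n) (((l:ℝ)+1)/n) ≤ ((k:ℝ)+1)/n := min_le_left _ _
      _ ≤ (l:ℝ)/n := div_mono_aux h1
      _ ≤ max ((k:ℝ)/n) ((l:ℝ)/n) := le_max_right _ _
  intro k l hkl
  rcases lt_or_gt_of_ne hkl with h | h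
  · exact key k l h
  · exact (key l k h).symm

noncomputable def rho (n : ℕ) (v : Fin n → ℝ) : Measure (ℝ × ℝ) :=
  Measure.sum (fun k : Fin n =>
    Measure.map (fun t : ℝ => (t, v k)) (volume.restrict (Ico ((k:ℝ)/n) (((k:ℝ)+1)/n))))

lemma rho_fst (hn : 1 ≤ n) (v : Fin n → ℝ) :
    (rho n v).map Prod.fst = volume.restrict (Icc (0:ℝ) 1) := by
  have hU := Iv_union hn
  have hD := Iv_disjoint (n := n)
  rw [← Measure.restrict_congr_set Ico_ae_eq_Icc]
  ext s hs
  rw [Measure.map_apply measurable_fst hs, rho, Measure.sum_apply _ (measurable_fst hs)]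
  have : ∀ k : Fin n,
      (Measure.map (fun t : ℝ => (t, v k)) (volume.restrict (Ico ((k:ℝ)/n) (((k:ℝ)+1)/n))))
        (Prod.fst ⁻¹' s) = volume (s ∩ Ico ((k:ℝ)/n) (((k:ℝ)+1)/n)) := by
    intro k
    rw [Measure.map_apply measurable_prodMk_right (measurable_fst hs),
      Measure.restrict_apply' measurableSet_Ico]
    congr 1
  simp_rw [this]
  rw [tsum_fintype]
  rw [← measure_biUnion_finset ?_ ?_]
  · rw [Measure.restrict_apply' measurableSet_Ico]
    congr 1
    simp only [Finset.mem_univ, iUnion_true]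
    rw [← Set.inter_iUnion, hU]
  · intro k _ l _ hkl
    exact (hD hkl).mono inter_subset_right inter_subset_right
  · exact fun k _ => hs.inter measurableSet_Ico

lemma vol_Iv (hn : 1 ≤ n) (k : Fin n) :
    volume (Ico ((k:ℝ)/n) (((k:ℝ)+1)/n)) = (n : ℝ≥0∞)⁻¹ := by
  have hn0 : (0:ℝ) < n := by exact_mod_cast hn
  rw [Real.volume_Ico]
  rw [show ((k:ℝ)+1)/n - (k:ℝ)/n = 1/n by field_simp; ring]
  rw [ENNReal.ofReal_div_of_pos hn0, ENNReal.ofReal_one, ENNReal.ofReal_natCast, one_div]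

lemma rho_snd (hn : 1 ≤ n) (v : Fin n → ℝ) :
    (rho n v).map Prod.snd = (n : ℝ≥0∞)⁻¹ • ∑ k : Fin n, Measure.dirac (v k) := by
  ext s hs
  rw [Measure.map_apply measurable_snd hs, rho, Measure.sum_apply _ (measurable_snd hs)]
  have : ∀ k : Fin n,
      (Measure.map (fun t : ℝ => (t, v k)) (volume.restrict (Ico ((k:ℝ)/n) (((k:ℝ)+1)/n))))
        (Prod.snd ⁻¹' s) = (n : ℝ≥0∞)⁻¹ * Measure.dirac (v k) s := by
    intro k
    rw [Measure.map_apply measurable_prodMk_right (measurable_snd hs)]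
    rw [Measure.dirac_apply' _ hs]
    by_cases h : v k ∈ s
    · have hpre : (fun t : ℝ => (t, v k)) ⁻¹' (Prod.snd ⁻¹' s) = univ := by
        ext t; simp [h]
      rw [hpre, Measure.restrict_apply_univ, vol_Iv hn k]
      simp [indicator, h]
    · have hpre : (fun t : ℝ => (t, v k)) ⁻¹' (Prod.snd ⁻¹' s) = ∅ := by
        ext t; simp [h]
      rw [hpre]
      simp [indicator, h]
  simp_rw [this, tsum_fintype]
  rw [Measure.smul_apply, Measure.coe_finset_sum, Finset.sum_apply, smul_eq_mul,
    Finset.mul_sum]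

lemma lint_Icc {f : ℝ → ℝ} (hf : Continuous f) (h0 : ∀ x, 0 ≤ f x) {a b : ℝ} (hab : a ≤ b) :
    ∫⁻ x in Icc a b, ENNReal.ofReal (f x) = ENNReal.ofReal (∫ x in a..b, f x) := by
  rw [← ofReal_integral_eq_lintegral_ofReal hf.integrableOn_Icc
    (Filter.Eventually.of_forall h0)]
  rw [intervalIntegral.integral_of_le hab, integral_Icc_eq_integral_Ioc]

lemma lint_Ico {f : ℝ → ℝ} (hf : Continuous f) (h0 : ∀ x, 0 ≤ f x) {a b : ℝ} (hab : a ≤ b) :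
    ∫⁻ x in Ico a b, ENNReal.ofReal (f x) = ENNReal.ofReal (∫ x in a..b, f x) := by
  rw [Measure.restrict_congr_set Ico_ae_eq_Icc]; exact lint_Icc hf h0 hab

lemma lint_Icc' {f : ℝ → ℝ} (hf : Continuous f) {a b : ℝ} (h0 : ∀ x ∈ Icc a b, 0 ≤ f x)
    (hab : a ≤ b) :
    ∫⁻ x in Icc a b, ENNReal.ofReal (f x) = ENNReal.ofReal (∫ x in a..b, f x) := by
  rw [← ofReal_integral_eq_lintegral_ofReal hf.integrableOn_Icc
    ((ae_restrict_iff' measurableSet_Icc).2 (Filter.Eventually.of_forall h0))]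
  rw [intervalIntegral.integral_of_le hab, integral_Icc_eq_integral_Ioc]

lemma rho_cost (v : Fin n → ℝ) :
    ∫⁻ p, ENNReal.ofReal ((p.1 - p.2) ^ 2) ∂(rho n v)
      = ∑ k : Fin n, ENNReal.ofReal (∫ t in ((k:ℝ)/n)..(((k:ℝ)+1)/n), (t - v k)^2) := by
  rw [rho, lintegral_sum_measure, tsum_fintype]
  congr 1
  ext k
  rw [lintegral_map (by fun_prop) measurable_prodMk_right]
  have hab : ((k:ℝ))/n ≤ ((k:ℝ)+1)/n := div_mono_aux (by linarith)
  exact lint_Ico (by continuity) (fun x => sq_nonneg _) hab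

lemma phi_eval (x a b : ℝ) :
    ∫ t in a..b, (t - x)^2 = ((b-x)^3 - (a-x)^3)/3 := by
  rw [show (fun t => (t - x)^2) = fun t => ((fun s => s^2) (t - x)) from rfl]
  rw [intervalIntegral.integral_comp_sub_right (fun s => s^2) x]
  rw [integral_pow]
  norm_num

lemma sum_phi (hn : 1 ≤ n) (v : Fin n → ℝ) :
    ∑ k : Fin n, ((((k:ℝ)+1)/n - v k)^3 - ((k:ℝ)/n - v k)^3)/3
      = 1/3 + (1/n) * ∑ k : Fin n, (v k)^2
        - (1/(n:ℝ)^2) * ∑ k : Fin n, (2*(k:ℝ)+1) * v k := by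
  have hn0 : (n:ℝ) ≠ 0 := by positivity
  have hterm : ∀ k : Fin n, ((((k:ℝ)+1)/n - v k)^3 - ((k:ℝ)/n - v k)^3)/3
      = (((k:ℝ)+1)^3 - (k:ℝ)^3)/(3*(n:ℝ)^3) + (1/n) * (v k)^2
        - (1/(n:ℝ)^2) * ((2*(k:ℝ)+1) * v k) := by
    intro k
    field_simp
    ring
  rw [Finset.sum_congr rfl (fun k _ => hterm k)]
  rw [Finset.sum_sub_distrib, Finset.sum_add_distrib, ← Finset.mul_sum, ← Finset.mul_sum]
  congr 2
  have : ∑ k : Fin n, (((k:ℝ)+1)^3 - (k:ℝ)^3)/(3*(n:ℝ)^3)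
      = (∑ k ∈ Finset.range n, (((k:ℝ)+1)^3 - (k:ℝ)^3)) / (3*(n:ℝ)^3) := by
    rw [Finset.sum_div]
    exact Fin.sum_univ_eq_sum_range (fun i : ℕ => (((i:ℝ)+1)^3 - (i:ℝ)^3)/(3*(n:ℝ)^3)) n
  have h2 : ∑ k ∈ Finset.range n, (((k:ℝ)+1)^3 - (k:ℝ)^3) = (n:ℝ)^3 := by
    have := Finset.sum_range_sub (fun i : ℕ => ((i:ℝ))^3) n
    simp only [Nat.cast_add, Nat.cast_one] at this
    rw [this]; simp
  rw [this, h2]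
  field_simp

lemma sorted_bound (u : Fin n → ℝ) (hu : ∀ k, 0 ≤ u k) :
    ∑ k : Fin n, (2 * ((Finset.univ.filter (fun j => u j < u k)).card : ℝ) + 1) * u k
      ≤ ∑ k : Fin n, (2*(k:ℝ)+1) * (u (Tuple.sort u k)) := by
  set σ := Tuple.sort u with hσ
  rw [← Equiv.sum_comp σ
    (fun i => (2 * ((Finset.univ.filter (fun j => u j < u i)).card : ℝ) + 1) * u i)]
  apply Finset.sum_le_sum
  intro k _
  have hcard : (Finset.univ.filter (fun j => u j < u (σ k))).card
      = (Finset.univ.filter (fun j => u (σ j) < u (σ k))).card := by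
    apply Finset.card_equiv σ.symm
    intro j
    simp only [Finset.mem_filter, Finset.mem_univ, true_and, Equiv.apply_symm_apply]
  have hsub : (Finset.univ.filter (fun j => u (σ j) < u (σ k))) ⊆ Finset.Iio k := by
    intro j hj
    simp only [Finset.mem_filter, Finset.mem_univ, true_and] at hj
    rw [Finset.mem_Iio]
    by_contra h
    push_neg at h
    exact absurd (Tuple.monotone_sort u h) (not_le.mpr hj)
  have hc : (Finset.univ.filter (fun j => u (σ j) < u (σ k))).card ≤ (k : ℕ) := by
    calc _ ≤ (Finset.Iio k).card := Finset.card_le_card hsub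
      _ = (k : ℕ) := Fin.card_Iio k
  have hle : (2 * ((Finset.univ.filter (fun j => u j < u (σ k))).card : ℝ) + 1)
      ≤ 2*(k:ℝ)+1 := by
    rw [hcard]
    have : ((Finset.univ.filter (fun j => u (σ j) < u (σ k))).card : ℝ) ≤ (k:ℝ) := by
      exact_mod_cast hc
    linarith
  exact mul_le_mul_of_nonneg_right hle (hu _)

noncomputable def Adef (n : ℕ) (u : Fin n → ℝ) : ℝ := 1/3 + (1/(n:ℝ)) * ∑ k, (u k)^2

noncomputable def Bdef (n : ℕ) (u : Fin n → ℝ) : ℝ :=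
  (1/(n:ℝ)^2) * ∑ k, (u k + 2 * ∑ j ∈ Finset.univ.erase k, (if u j < u k then u k else 0))

lemma Bterm (u : Fin n → ℝ) (k : Fin n) :
    u k + 2 * ∑ j ∈ Finset.univ.erase k, (if u j < u k then u k else 0)
      = (2 * ((Finset.univ.filter (fun j => u j < u k)).card : ℝ) + 1) * u k := by
  rw [Finset.sum_ite, Finset.sum_const, Finset.sum_const_zero, add_zero]
  have : (Finset.univ.erase k).filter (fun j => u j < u k)
      = Finset.univ.filter (fun j => u j < u k) := by
    rw [Finset.filter_erase, Finset.erase_eq_of_notMem]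
    simp [lt_irrefl]
  rw [this, nsmul_eq_mul]
  ring

lemma Bdef_nonneg (u : Fin n → ℝ) (hu : ∀ k, 0 ≤ u k) : 0 ≤ Bdef n u := by
  apply mul_nonneg (by positivity)
  apply Finset.sum_nonneg
  intro k _
  have : (0:ℝ) ≤ ∑ j ∈ Finset.univ.erase k, (if u j < u k then u k else 0) := by
    apply Finset.sum_nonneg
    intro j _
    split <;> simp [hu k]
  nlinarith [hu k]

lemma pointwise_bound (hn : 1 ≤ n) (u : Fin n → ℝ) (hu : ∀ k, 0 ≤ u k) :
    sInf {c : ℝ≥0∞ | ∃ ρ : Measure (ℝ × ℝ),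
        ρ.map Prod.fst = volume.restrict (Set.Icc (0 : ℝ) 1) ∧
        ρ.map Prod.snd = (n : ℝ≥0∞)⁻¹ • ∑ k : Fin n, Measure.dirac (u k) ∧
        c = ∫⁻ p, ENNReal.ofReal ((p.1 - p.2) ^ 2) ∂ρ}
      ≤ ENNReal.ofReal (Adef n u - Bdef n u) := by
  set v : Fin n → ℝ := u ∘ Tuple.sort u with hv
  have hmem : (∫⁻ p, ENNReal.ofReal ((p.1 - p.2) ^ 2) ∂(rho n v)) ∈
      {c : ℝ≥0∞ | ∃ ρ : Measure (ℝ × ℝ),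
        ρ.map Prod.fst = volume.restrict (Set.Icc (0 : ℝ) 1) ∧
        ρ.map Prod.snd = (n : ℝ≥0∞)⁻¹ • ∑ k : Fin n, Measure.dirac (u k) ∧
        c = ∫⁻ p, ENNReal.ofReal ((p.1 - p.2) ^ 2) ∂ρ} := by
    refine ⟨rho n v, rho_fst hn v, ?_, rfl⟩
    rw [rho_snd hn v]
    congr 1
    exact Equiv.sum_comp (Tuple.sort u) (fun i => Measure.dirac (u i))
  refine le_trans (sInf_le hmem) ?_
  rw [rho_cost v]
  have hint : ∀ k : Fin n, ∫ t in ((k:ℝ)/n)..(((k:ℝ)+1)/n), (t - v k)^2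
      = ((((k:ℝ)+1)/n - v k)^3 - ((k:ℝ)/n - v k)^3)/3 := fun k => phi_eval _ _ _
  have hnn : ∀ k : Fin n, 0 ≤ ∫ t in ((k:ℝ)/n)..(((k:ℝ)+1)/n), (t - v k)^2 := by
    intro k
    apply intervalIntegral.integral_nonneg (div_mono_aux (by linarith))
    intro x _; exact sq_nonneg _
  rw [← ENNReal.ofReal_sum_of_nonneg (fun k _ => hnn k)]
  apply ENNReal.ofReal_le_ofReal
  rw [Finset.sum_congr rfl (fun k _ => hint k), sum_phi hn v]
  have hsq : ∑ k : Fin n, (v k)^2 = ∑ k : Fin n, (u k)^2 :=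
    Equiv.sum_comp (Tuple.sort u) (fun i => (u i)^2)
  have hB : Bdef n u ≤ (1/(n:ℝ)^2) * ∑ k : Fin n, (2*(k:ℝ)+1) * v k := by
    rw [Bdef]
    apply mul_le_mul_of_nonneg_left ?_ (by positivity)
    rw [Finset.sum_congr rfl (fun k _ => Bterm u k)]
    exact sorted_bound u hu
  rw [Adef, hsq]
  linarith

lemma map_eval (k : Fin n) : (pin n).map (fun u => u k) = nu := by
  ext s hs
  rw [Measure.map_apply (measurable_pi_apply k) hs]
  have : (fun u : Fin n → ℝ => u k) ⁻¹' s = univ.pi (fun i => if i = k then s else univ) := by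
    ext u; simp [Set.mem_pi]
  rw [this, pin, Measure.pi_pi]
  rw [← Finset.mul_prod_erase Finset.univ _ (Finset.mem_univ k)]
  simp only [if_pos rfl]
  have : ∀ i ∈ Finset.univ.erase k, nu (if i = k then s else univ) = 1 := by
    intro i hi
    rw [if_neg (Finset.mem_erase.1 hi).1, measure_univ]
  rw [Finset.prod_congr rfl this]
  simp

lemma map_pair {j k : Fin n} (hjk : j ≠ k) :
    (pin n).map (fun u => (u j, u k)) = nu.prod nu := by
  refine (Measure.prod_eq fun s t hs ht => ?_).symm
  rw [Measure.map_apply (by fun_prop) (hs.prod ht)]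
  have : (fun u : Fin n → ℝ => (u j, u k)) ⁻¹' (s ×ˢ t)
      = univ.pi (fun i => if i = j then s else if i = k then t else univ) := by
    ext u
    simp only [mem_preimage, Set.mem_prod, Set.mem_pi, mem_univ, true_imp_iff]
    constructor
    · rintro ⟨h1, h2⟩ i
      by_cases hij : i = j
      · subst hij; simp [if_pos rfl, h1]
      · by_cases hik : i = k
        · subst hik; simp [if_neg hij, if_pos rfl, h2]
        · simp [if_neg hij, if_neg hik]
    · intro h
      constructor
      · have := h j; simpa using this
      · have := h k; rw [if_neg (Ne.symm hjk), if_pos rfl] at this; exact this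
  rw [this, pin, Measure.pi_pi]
  rw [← Finset.mul_prod_erase Finset.univ _ (Finset.mem_univ j)]
  rw [← Finset.mul_prod_erase (Finset.univ.erase j) _
    (Finset.mem_erase.2 ⟨Ne.symm hjk, Finset.mem_univ k⟩)]
  have h1 : ∀ i ∈ (Finset.univ.erase j).erase k,
      nu (if i = j then s else if i = k then t else univ) = 1 := by
    intro i hi
    obtain ⟨hik, hij, -⟩ := Finset.mem_erase.1 hi |>.imp id (fun h => Finset.mem_erase.1 h)
    rw [if_neg hij, if_neg hik, measure_univ]
  rw [Finset.prod_congr rfl h1]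
  rw [if_pos rfl, if_neg (Ne.symm hjk), if_pos rfl]
  simp

lemma nu_sq : ∫⁻ x, ENNReal.ofReal (x^2) ∂nu = ENNReal.ofReal (1/3) := by
  rw [nu, lint_Icc' (by continuity) (fun x _ => sq_nonneg x) zero_le_one, integral_pow]
  norm_num

lemma nu_id : ∫⁻ x, ENNReal.ofReal x ∂nu = ENNReal.ofReal (1/2) := by
  have := lint_Icc' (f := fun x : ℝ => x) continuous_id (a := 0) (b := 1)
    (fun x hx => hx.1) zero_le_one
  rw [nu, this, integral_id]
  norm_num

lemma nu_cross (x : ℝ) (hx : x ∈ Icc (0:ℝ) 1) :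
    ∫⁻ y, ENNReal.ofReal (if x < y then y else 0) ∂nu = ENNReal.ofReal ((1 - x^2)/2) := by
  have hind : ∀ y, ENNReal.ofReal (if x < y then y else 0)
      = (Ioi x).indicator (fun y => ENNReal.ofReal y) y := by
    intro y
    by_cases h : x < y <;> simp [indicator, h]
  simp_rw [hind]
  rw [lintegral_indicator measurableSet_Ioi, nu, Measure.restrict_restrict measurableSet_Ioi]
  have hset : Ioi x ∩ Icc 0 1 = Ioc x 1 := by
    ext y
    simp only [mem_inter_iff, mem_Ioi, mem_Icc, mem_Ioc]
    constructor
    · rintro ⟨h1, _, h3⟩; exact ⟨h1, h3⟩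
    · rintro ⟨h1, h2⟩; exact ⟨h1, le_trans hx.1 h1.le, h2⟩
  rw [hset, Measure.restrict_congr_set Ioc_ae_eq_Icc,
    lint_Icc' (f := fun y : ℝ => y) continuous_id (fun y hy => le_trans hx.1 hy.1) hx.2, integral_id]
  congr 1
  ring

lemma sq_pin (k : Fin n) : ∫⁻ u, ENNReal.ofReal ((u k)^2) ∂(pin n) = ENNReal.ofReal (1/3) := by
  have : ∫⁻ u, ENNReal.ofReal ((u k)^2) ∂(pin n)
      = ∫⁻ x, ENNReal.ofReal (x^2) ∂((pin n).map (fun u => u k)) := by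
    rw [lintegral_map (by fun_prop) (measurable_pi_apply k)]
  rw [this, map_eval, nu_sq]

lemma id_pin (k : Fin n) : ∫⁻ u, ENNReal.ofReal (u k) ∂(pin n) = ENNReal.ofReal (1/2) := by
  have : ∫⁻ u, ENNReal.ofReal (u k) ∂(pin n)
      = ∫⁻ x, ENNReal.ofReal x ∂((pin n).map (fun u => u k)) := by
    rw [lintegral_map (by fun_prop) (measurable_pi_apply k)]
  rw [this, map_eval, nu_id]

lemma cross_pin {j k : Fin n} (hjk : j ≠ k) :
    ∫⁻ u, ENNReal.ofReal (if u j < u k then u k else 0) ∂(pin n) = ENNReal.ofReal (1/3) := by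
  have hF : Measurable (fun p : ℝ × ℝ => ENNReal.ofReal (if p.1 < p.2 then p.2 else 0)) := by
    apply ENNReal.measurable_ofReal.comp
    exact Measurable.ite (measurableSet_lt measurable_fst measurable_snd)
      measurable_snd measurable_const
  have h1 : ∫⁻ u, ENNReal.ofReal (if u j < u k then u k else 0) ∂(pin n)
      = ∫⁻ p, ENNReal.ofReal (if p.1 < p.2 then p.2 else 0)
          ∂((pin n).map (fun u => (u j, u k))) := by
    rw [lintegral_map hF (by fun_prop)]
  rw [h1, map_pair hjk, lintegral_prod _ hF.aemeasurable]
  have h2 : ∫⁻ x, (∫⁻ y, ENNReal.ofReal (if x < y then y else 0) ∂nu) ∂nu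
      = ∫⁻ x, ENNReal.ofReal ((1 - x^2)/2) ∂nu := by
    rw [nu]
    apply setLIntegral_congr_fun measurableSet_Icc
    exact fun x hx => nu_cross x hx
  rw [h2, nu]
  rw [lint_Icc' (by continuity) (fun x hx => by nlinarith [hx.1, hx.2]) zero_le_one]
  have : ∫ x in (0:ℝ)..1, (1 - x^2)/2 = 1/3 := by
    rw [intervalIntegral.integral_div,
      intervalIntegral.integral_sub intervalIntegrable_const
        (intervalIntegral.intervalIntegrable_pow 2),
      integral_pow]
    norm_num
  rw [this]

lemma meas_B : Measurable (fun u : Fin n → ℝ => Bdef n u) := by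
  apply Measurable.const_mul
  apply Finset.measurable_sum
  intro k _
  apply (measurable_pi_apply k).add
  apply Measurable.const_mul
  apply Finset.measurable_sum
  intro j _
  exact Measurable.ite (measurableSet_lt (measurable_pi_apply j) (measurable_pi_apply k))
    (measurable_pi_apply k) measurable_const

lemma ae_mem_Icc (n : ℕ) : ∀ᵐ u ∂(pin n), ∀ k, u k ∈ Icc (0:ℝ) 1 := by
  have h1 : (pin n) (univ.pi fun _ : Fin n => Icc (0:ℝ) 1) = 1 := by
    rw [pin, Measure.pi_pi]
    simp [nu_Icc]
  rw [ae_iff]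
  refine measure_mono_null (t := (univ.pi fun _ : Fin n => Icc (0:ℝ) 1)ᶜ) (fun u hu => ?_) ?_
  ·
    simp only [mem_setOf_eq, not_forall] at hu
    obtain ⟨k, hk⟩ := hu
    simp only [mem_compl_iff, Set.mem_pi, mem_univ, true_imp_iff, not_forall]
    exact ⟨k, hk⟩
  · rw [measure_compl (MeasurableSet.univ_pi fun _ => measurableSet_Icc)
      (by rw [h1]; exact ENNReal.one_ne_top), h1, measure_univ, tsub_self]

lemma intA (hn : 1 ≤ n) :
    ∫⁻ u, ENNReal.ofReal (Adef n u) ∂(pin n) = ENNReal.ofReal (2/3) := by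
  have hn0 : (0:ℝ) < n := by exact_mod_cast hn
  have hsplit : ∀ u : Fin n → ℝ, ENNReal.ofReal (Adef n u)
      = ENNReal.ofReal (1/3) + ENNReal.ofReal (1/(n:ℝ)) * ∑ k, ENNReal.ofReal ((u k)^2) := by
    intro u
    rw [Adef, ENNReal.ofReal_add (by norm_num) (by positivity),
      ENNReal.ofReal_mul (by positivity),
      ENNReal.ofReal_sum_of_nonneg (fun k _ => sq_nonneg _)]
  simp_rw [hsplit]
  rw [lintegral_add_left measurable_const, lintegral_const, measure_univ, mul_one,
    lintegral_const_mul _ (by fun_prop)]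
  rw [lintegral_finset_sum _ (fun k _ => by fun_prop)]
  simp_rw [sq_pin]
  rw [Finset.sum_const, Finset.card_univ, Fintype.card_fin, nsmul_eq_mul]
  rw [show ((n:ℝ≥0∞)) = ENNReal.ofReal (n:ℝ) by rw [ENNReal.ofReal_natCast]]
  rw [← ENNReal.ofReal_mul (by positivity), ← ENNReal.ofReal_mul (by positivity),
    ← ENNReal.ofReal_add (by norm_num) (by positivity)]
  congr 1
  field_simp
  ring

lemma intB (hn : 1 ≤ n) :
    ∫⁻ u, ENNReal.ofReal (Bdef n u) ∂(pin n)
      = ENNReal.ofReal ((1/(n:ℝ)^2) * ((n:ℝ) * (1/2 + 2 * ((((n-1 : ℕ)):ℝ) * (1/3))))) := by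
  have hcong : ∀ᵐ u ∂(pin n), ENNReal.ofReal (Bdef n u)
      = ENNReal.ofReal (1/(n:ℝ)^2) * ∑ k, (ENNReal.ofReal (u k)
          + 2 * ∑ j ∈ Finset.univ.erase k, ENNReal.ofReal (if u j < u k then u k else 0)) := by
    filter_upwards [ae_mem_Icc n] with u hu
    have h0 : ∀ k, (0:ℝ) ≤ u k := fun k => (hu k).1
    have hterm : ∀ k : Fin n,
        (0:ℝ) ≤ u k + 2 * ∑ j ∈ Finset.univ.erase k, (if u j < u k then u k else 0) := by
      intro k
      have : (0:ℝ) ≤ ∑ j ∈ Finset.univ.erase k, (if u j < u k then u k else 0) :=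
        Finset.sum_nonneg (fun j _ => by split <;> simp [h0 k])
      nlinarith [h0 k]
    rw [Bdef, ENNReal.ofReal_mul (by positivity),
      ENNReal.ofReal_sum_of_nonneg (fun k _ => hterm k)]
    congr 1
    apply Finset.sum_congr rfl
    intro k _
    have hs : (0:ℝ) ≤ ∑ j ∈ Finset.univ.erase k, (if u j < u k then u k else 0) :=
      Finset.sum_nonneg (fun j _ => by split <;> simp [h0 k])
    rw [ENNReal.ofReal_add (h0 k) (by linarith), ENNReal.ofReal_mul (by norm_num),
      ENNReal.ofReal_sum_of_nonneg (fun j _ => by split <;> simp [h0 k]),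
      ENNReal.ofReal_ofNat]
  rw [lintegral_congr_ae hcong]
  rw [lintegral_const_mul _ (by
    apply Finset.measurable_sum
    intro k _
    apply Measurable.fun_add (by fun_prop)
    apply Measurable.const_mul
    apply Finset.measurable_sum
    intro j _
    apply Measurable.ennreal_ofReal
    exact Measurable.ite (measurableSet_lt (measurable_pi_apply j) (measurable_pi_apply k))
      (measurable_pi_apply k) measurable_const)]
  rw [lintegral_finset_sum _ (fun k _ => by
    apply Measurable.fun_add (by fun_prop)
    apply Measurable.const_mul
    apply Finset.measurable_sum
    intro j _
    apply Measurable.ennreal_ofReal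
    exact Measurable.ite (measurableSet_lt (measurable_pi_apply j) (measurable_pi_apply k))
      (measurable_pi_apply k) measurable_const)]
  have hk : ∀ k : Fin n,
      ∫⁻ u, (ENNReal.ofReal (u k)
          + 2 * ∑ j ∈ Finset.univ.erase k, ENNReal.ofReal (if u j < u k then u k else 0)) ∂(pin n)
        = ENNReal.ofReal (1/2) + 2 * (((n - 1 : ℕ)) : ℝ≥0∞) * ENNReal.ofReal (1/3) := by
    intro k
    rw [lintegral_add_left (by fun_prop)]
    rw [lintegral_const_mul _ (by
      apply Finset.measurable_sum
      intro j _
      apply Measurable.ennreal_ofReal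
      exact Measurable.ite (measurableSet_lt (measurable_pi_apply j) (measurable_pi_apply k))
        (measurable_pi_apply k) measurable_const)]
    rw [lintegral_finset_sum _ (fun j _ => by
      apply Measurable.ennreal_ofReal
      exact Measurable.ite (measurableSet_lt (measurable_pi_apply j) (measurable_pi_apply k))
        (measurable_pi_apply k) measurable_const)]
    rw [id_pin k]
    have : ∀ j ∈ Finset.univ.erase k,
        ∫⁻ u, ENNReal.ofReal (if u j < u k then u k else 0) ∂(pin n) = ENNReal.ofReal (1/3) :=
      fun j hj => cross_pin (Finset.mem_erase.1 hj).1
    rw [Finset.sum_congr rfl this, Finset.sum_const, Finset.card_erase_of_mem (Finset.mem_univ k),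
      Finset.card_univ, Fintype.card_fin, nsmul_eq_mul, mul_assoc]
  rw [Finset.sum_congr rfl (fun k _ => hk k), Finset.sum_const, Finset.card_univ,
    Fintype.card_fin, nsmul_eq_mul]
  have c2 : (2:ℝ≥0∞) = ENNReal.ofReal 2 := by rw [ENNReal.ofReal_ofNat]
  rw [show ((n:ℝ≥0∞)) = ENNReal.ofReal (n:ℝ) by rw [ENNReal.ofReal_natCast],
    show (((n-1:ℕ)):ℝ≥0∞) = ENNReal.ofReal ((n-1:ℕ):ℝ) by rw [ENNReal.ofReal_natCast], c2,
    ← ENNReal.ofReal_mul (by norm_num), ← ENNReal.ofReal_mul (by positivity),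
    ← ENNReal.ofReal_add (by norm_num) (by positivity),
    ← ENNReal.ofReal_mul (by positivity), ← ENNReal.ofReal_mul (by positivity)]
  congr 1
  ring

lemma B_le_A (hn : 1 ≤ n) (u : Fin n → ℝ) (hu : ∀ k, 0 ≤ u k) : Bdef n u ≤ Adef n u := by
  set v : Fin n → ℝ := u ∘ Tuple.sort u with hv
  have hphi : 0 ≤ ∑ k : Fin n, ((((k:ℝ)+1)/n - v k)^3 - ((k:ℝ)/n - v k)^3)/3 := by
    apply Finset.sum_nonneg
    intro k _
    rw [← phi_eval (v k) ((k:ℝ)/n) (((k:ℝ)+1)/n)]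
    exact intervalIntegral.integral_nonneg (div_mono_aux (by linarith)) (fun x _ => sq_nonneg _)
  have hsum := sum_phi hn v
  have hsq : ∑ k : Fin n, (v k)^2 = ∑ k : Fin n, (u k)^2 :=
    Equiv.sum_comp (Tuple.sort u) (fun i => (u i)^2)
  have hB : Bdef n u ≤ (1/(n:ℝ)^2) * ∑ k : Fin n, (2*(k:ℝ)+1) * v k := by
    rw [Bdef]
    apply mul_le_mul_of_nonneg_left ?_ (by positivity)
    rw [Finset.sum_congr rfl (fun k _ => Bterm u k)]
    exact sorted_bound u hu
  rw [hsq] at hsum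
  rw [Adef]
  linarith

lemma final_int (hn : 1 ≤ n) :
    ∫⁻ u, ENNReal.ofReal (Adef n u - Bdef n u) ∂(pin n) = ENNReal.ofReal (1/(6*(n:ℝ))) := by
  have hBm : Measurable (fun u : Fin n → ℝ => ENNReal.ofReal (Bdef n u)) :=
    meas_B.ennreal_ofReal
  have hadd : ∫⁻ u, ENNReal.ofReal (Adef n u - Bdef n u) ∂(pin n)
      + ∫⁻ u, ENNReal.ofReal (Bdef n u) ∂(pin n)
      = ∫⁻ u, ENNReal.ofReal (Adef n u) ∂(pin n) := by
    rw [← lintegral_add_right _ hBm]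
    apply lintegral_congr_ae
    filter_upwards [ae_mem_Icc n] with u hu
    have h0 : ∀ k, (0:ℝ) ≤ u k := fun k => (hu k).1
    rw [← ENNReal.ofReal_add (sub_nonneg.2 (B_le_A hn u h0)) (Bdef_nonneg u h0),
      sub_add_cancel]
  rw [intA hn, intB hn] at hadd
  have hn0 : (0:ℝ) < n := by exact_mod_cast hn
  have harith : ENNReal.ofReal (2/3)
      = ENNReal.ofReal (1/(6*(n:ℝ)))
        + ENNReal.ofReal ((1/(n:ℝ)^2) * ((n:ℝ) * (1/2 + 2 * ((((n-1 : ℕ)):ℝ) * (1/3))))) := by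
    rw [← ENNReal.ofReal_add (by positivity) (by positivity)]
    congr 1
    have hc : ((n-1 : ℕ):ℝ) = (n:ℝ) - 1 := by
      rw [Nat.cast_sub hn, Nat.cast_one]
    rw [hc]
    field_simp
    ring
  rw [harith] at hadd
  exact WithTop.add_right_cancel ENNReal.ofReal_ne_top hadd

end BL

open BL in
/-- Bobkov–Ledoux bound: if `μ` is uniform on `[0,1]` and `μₙ` is the empirical measure
of `n` i.i.d. uniform samples, then `E[W₂(μ, μₙ)²] ≤ 1/(6n)`, where
`W₂²` is the infimal squared-distance transport cost over couplings. -/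
theorem empirical_wasserstein2_uniform_bound (n : ℕ) (hn : 1 ≤ n) :
    ∫⁻ u : Fin n → ℝ,
        sInf {c : ℝ≥0∞ | ∃ ρ : Measure (ℝ × ℝ),
            ρ.map Prod.fst = volume.restrict (Set.Icc (0 : ℝ) 1) ∧
            ρ.map Prod.snd = (n : ℝ≥0∞)⁻¹ • ∑ k : Fin n, Measure.dirac (u k) ∧
            c = ∫⁻ p, ENNReal.ofReal ((p.1 - p.2) ^ 2) ∂ρ}
        ∂(Measure.pi fun _ : Fin n => volume.restrict (Set.Icc (0 : ℝ) 1))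
      ≤ ENNReal.ofReal (1 / (6 * n)) := by
  have hle : ∫⁻ u : Fin n → ℝ,
        sInf {c : ℝ≥0∞ | ∃ ρ : Measure (ℝ × ℝ),
            ρ.map Prod.fst = volume.restrict (Set.Icc (0 : ℝ) 1) ∧
            ρ.map Prod.snd = (n : ℝ≥0∞)⁻¹ • ∑ k : Fin n, Measure.dirac (u k) ∧
            c = ∫⁻ p, ENNReal.ofReal ((p.1 - p.2) ^ 2) ∂ρ}
        ∂(pin n)
      ≤ ∫⁻ u, ENNReal.ofReal (Adef n u - Bdef n u) ∂(pin n) := by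
    apply lintegral_mono_ae
    filter_upwards [ae_mem_Icc n] with u hu
    exact pointwise_bound hn u (fun k => (hu k).1)
  calc _ ≤ ∫⁻ u, ENNReal.ofReal (Adef n u - Bdef n u) ∂(pin n) := hle
    _ = ENNReal.ofReal (1/(6*(n:ℝ))) := final_int hn
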